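/- Under assumption (H), given a principal eigen-triple (λ⋆, η⋆, h⋆), for every initial probability measure μ and every n ≥ 0 the normalized flow satisfies ‖η_n − η⋆‖ ≤ ρ^n · 4(ε⁺/ε⁻)³, where ρ := 1 − ε⁻/ε⁺ and ‖·‖ is the total variation norm; the bound does not depend on μ. -/

import Mathlib

open MeasureTheory ProbabilityTheory Filter
open scoped ENNReal

/-- The operator `Q(φ)(x) = G(x) ∫ φ(y) M(x,dy)` associated with the kernel
`Q(x,dy) := G(x) M(x,dy)`. -/
noncomputable def Qop {X : Type*} [MeasurableSpace X] (G : X → ℝ) (M : Kernel X X)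
    (φ : X → ℝ) (x : X) : ℝ :=
  G x * ∫ y, φ y ∂(M x)

/-- The `n`-fold iterate `Q^{(n)}` of the operator `Q`, `Q^{(0)} = Id`. -/
noncomputable def Qiter {X : Type*} [MeasurableSpace X] (G : X → ℝ) (M : Kernel X X) :
    ℕ → (X → ℝ) → X → ℝ
  | 0 => fun φ => φ
  | n + 1 => fun φ => Qop G M (Qiter G M n φ)

/-- `η_n(φ)` where `η_0 := μ` and `η_n := μQ^{(n)} / μQ^{(n)}(1)`. -/
noncomputable def etaInt {X : Type*} [MeasurableSpace X] (G : X → ℝ) (M : Kernel X X)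
    (μ : Measure X) (n : ℕ) (φ : X → ℝ) : ℝ :=
  (∫ x, Qiter G M n φ x ∂μ) / ∫ x, Qiter G M n (fun _ => (1 : ℝ)) x ∂μ

/-- `h_{p,n}(x) := Q^{(n−p)}(1)(x) / η_p Q^{(n−p)}(1)` (which equals `1` when `p = n`). -/
noncomputable def hpn {X : Type*} [MeasurableSpace X] (G : X → ℝ) (M : Kernel X X)
    (μ : Measure X) (p n : ℕ) (x : X) : ℝ :=
  Qiter G M (n - p) (fun _ => (1 : ℝ)) x /
    etaInt G M μ p (Qiter G M (n - p) (fun _ => (1 : ℝ)))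

set_option linter.unusedSectionVars false
set_option linter.unusedVariables false
set_option maxHeartbeats 1000000

section Aux
variable {X : Type*} [MeasurableSpace X]
    (G : X → ℝ) (M : Kernel X X) [IsMarkovKernel M]
    (ν : Measure X) [IsProbabilityMeasure ν]
    (q : X → X → ℝ) (εm εp : ℝ)
    (hq_meas : Measurable fun p : X × X => q p.1 p.2)
    (hεm_pos : 0 < εm) (hεle : εm ≤ εp)
    (hq_lb : ∀ x y, εm ≤ q x y) (hq_ub : ∀ x y, q x y ≤ εp)
    (hG_pos : ∀ x, 0 < G x)
    (hH : ∀ x (A : Set X), MeasurableSet A →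
      ENNReal.ofReal (G x) * M x A = ∫⁻ y in A, ENNReal.ofReal (q x y) ∂ν)
    (lam : ℝ) (hlam_pos : 0 < lam)
    (ηs : Measure X) [IsProbabilityMeasure ηs]
    (h_meas_eq : ∀ A : Set X, MeasurableSet A →
      ∫⁻ x, ENNReal.ofReal (G x) * M x A ∂ηs = ENNReal.ofReal lam * ηs A)

lemma bdd_integrable {f : X → ℝ} (hf : Measurable f) (C : ℝ) (hb : ∀ y, |f y| ≤ C)
    (ρ : Measure X) [IsFiniteMeasure ρ] : Integrable f ρ :=
  (integrable_const C).mono' hf.aestronglyMeasurable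
    (Eventually.of_forall fun y => by simpa using hb y)

lemma ratio_close (ρ : Measure X) [IsProbabilityMeasure ρ] {u g : X → ℝ}
    (hu : Measurable u) (hg : Measurable g) (Cu Cg cg : ℝ) (hcg : 0 < cg)
    (hglb : ∀ x, cg ≤ g x) (hgub : ∀ x, g x ≤ Cg) (hub2 : ∀ x, |u x| ≤ Cu)
    (c D : ℝ) (hD : 0 ≤ D) (hclose : ∀ x, |u x / g x - c| ≤ D) :
    |(∫ x, u x ∂ρ) / (∫ x, g x ∂ρ) - c| ≤ D := by
  have gpos : ∀ x, 0 < g x := fun x => lt_of_lt_of_le hcg (hglb x)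
  have iu : Integrable u ρ := bdd_integrable hu Cu hub2 ρ
  have ig : Integrable g ρ := bdd_integrable hg Cg
    (fun x => by rw [abs_of_pos (gpos x)]; exact hgub x) ρ
  set B := ∫ x, g x ∂ρ with hB
  have hBlb : cg ≤ B := by
    rw [hB]
    calc cg = ∫ _x, cg ∂ρ := by simp
      _ ≤ ∫ x, g x ∂ρ := integral_mono (integrable_const _) ig hglb
  have hBpos : 0 < B := lt_of_lt_of_le hcg hBlb
  have key : |(∫ x, u x ∂ρ) - c * B| ≤ D * B := by
    have e : (∫ x, u x ∂ρ) - c * B = ∫ x, (u x / g x - c) * g x ∂ρ := by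
      have ptw : ∀ x, (u x / g x - c) * g x = u x - c * g x := by
        intro x
        field_simp [(gpos x).ne']
      rw [integral_congr_ae (Eventually.of_forall ptw),
        integral_sub iu (ig.const_mul c), integral_const_mul]
    rw [e]
    have iprod : Integrable (fun x => (u x / g x - c) * g x) ρ := by
      refine bdd_integrable (((hu.div hg).sub measurable_const).mul hg)
        ((Cu / cg + |c|) * Cg) (fun x => ?_) ρ
      show |(u x / g x - c) * g x| ≤ (Cu / cg + |c|) * Cg
      rw [abs_mul, abs_of_pos (gpos x)]
      refine mul_le_mul ?_ (hgub x) (gpos x).le ?_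
      · calc |u x / g x - c| ≤ |u x / g x| + |c| := abs_sub _ _
          _ ≤ Cu / cg + |c| := by
              gcongr
              rw [abs_div, abs_of_pos (gpos x)]
              exact div_le_div₀ (le_trans (abs_nonneg _) (hub2 x)) (hub2 x) hcg (hglb x)
      · exact add_nonneg (div_nonneg (le_trans (abs_nonneg (u x)) (hub2 x)) hcg.le)
          (abs_nonneg _)
    calc |∫ x, (u x / g x - c) * g x ∂ρ|
        ≤ ∫ x, |u x / g x - c| * |g x| ∂ρ := by
          simpa [Real.norm_eq_abs, abs_mul] using
            norm_integral_le_integral_norm (μ := ρ) (fun x => (u x / g x - c) * g x)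
      _ ≤ ∫ x, D * g x ∂ρ := by
          refine integral_mono (by simpa [abs_mul] using iprod.abs)
            (ig.const_mul D) fun x => ?_
          rw [abs_of_pos (gpos x)]
          exact mul_le_mul_of_nonneg_right (hclose x) (gpos x).le
      _ = D * B := by rw [integral_const_mul]
  have e2 : (∫ x, u x ∂ρ) / B - c = ((∫ x, u x ∂ρ) - c * B) / B := by
    rw [sub_div, mul_div_cancel_right₀ _ hBpos.ne']
  rw [e2, abs_div, abs_of_pos hBpos, div_le_iff₀ hBpos]
  linarith [key]

include hq_meas hεm_pos hεle hq_lb hq_ub hG_pos hH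

lemma rep (φ : X → ℝ) (x : X) :
    Qop G M φ x = ∫ y, q x y * φ y ∂ν := by
  have hqx : Measurable fun y => q x y := hq_meas.comp measurable_prodMk_left
  have hqnn : ∀ y, 0 ≤ q x y := fun y => le_trans hεm_pos.le (hq_lb x y)
  have hmeq : (ENNReal.ofReal (G x)) • (M x) =
      ν.withDensity (fun y => ((q x y).toNNReal : ℝ≥0∞)) := by
    ext A hA
    rw [Measure.smul_apply, smul_eq_mul, hH x A hA, withDensity_apply _ hA]
    rfl
  have h1 : ∫ y, φ y ∂((ENNReal.ofReal (G x)) • (M x)) = G x * ∫ y, φ y ∂(M x) := by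
    rw [integral_smul_measure, ENNReal.toReal_ofReal (hG_pos x).le, smul_eq_mul]
  have h2 : ∫ y, φ y ∂(ν.withDensity (fun y => ((q x y).toNNReal : ℝ≥0∞)))
      = ∫ y, q x y * φ y ∂ν := by
    rw [integral_withDensity_eq_integral_smul (hqx.real_toNNReal)]
    refine integral_congr_ae (Eventually.of_forall fun y => ?_)
    simp [NNReal.smul_def, Real.coe_toNNReal _ (hqnn y)]
  rw [Qop, ← h1, hmeq, h2]

lemma Qop_meas {φ : X → ℝ} (hφ : Measurable φ) :
    Measurable fun x => ∫ y, q x y * φ y ∂ν := by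
  have : StronglyMeasurable fun p : X × X => q p.1 p.2 * φ p.2 :=
    (hq_meas.mul (hφ.comp measurable_snd)).stronglyMeasurable
  exact this.integral_prod_right'.measurable

lemma Qiter_bundle (n : ℕ) {φ : X → ℝ} (hφ : Measurable φ) (hb : ∀ y, |φ y| ≤ 1) :
    Measurable (Qiter G M n φ)
    ∧ (∀ x, |Qiter G M n φ x| ≤ Qiter G M n (fun _ => (1:ℝ)) x)
    ∧ Measurable (Qiter G M n (fun _ => (1:ℝ)))
    ∧ (∀ x, Qiter G M n (fun _ => (1:ℝ)) x ≤ εp ^ n)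
    ∧ (∀ x, εm ^ n ≤ Qiter G M n (fun _ => (1:ℝ)) x) := by
  induction n with
  | zero =>
    refine ⟨hφ, fun x => by simpa [Qiter] using hb x, measurable_const, ?_, ?_⟩ <;>
      simp [Qiter]
  | succ n ih =>
    obtain ⟨hm, hdom, hm1, hub, hlb⟩ := ih
    have hqx : ∀ x, Measurable fun y => q x y :=
      fun x => hq_meas.comp measurable_prodMk_left
    have hqnn : ∀ x y, 0 ≤ q x y := fun x y => le_trans hεm_pos.le (hq_lb x y)
    have habs : ∀ x, |Qiter G M n φ x| ≤ εp ^ n := fun x => (hdom x).trans (hub x)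
    have h1nn : ∀ x, (0:ℝ) ≤ Qiter G M n (fun _ => 1) x :=
      fun x => le_trans (pow_nonneg hεm_pos.le n) (hlb x)
    -- representation of the two (n+1)-iterates
    have r1 : ∀ x, Qiter G M (n+1) φ x = ∫ y, q x y * Qiter G M n φ y ∂ν :=
      fun x => rep G M ν q εm εp hq_meas hεm_pos hεle hq_lb hq_ub hG_pos hH _ x
    have r2 : ∀ x, Qiter G M (n+1) (fun _ => (1:ℝ)) x
        = ∫ y, q x y * Qiter G M n (fun _ => (1:ℝ)) y ∂ν :=
      fun x => rep G M ν q εm εp hq_meas hεm_pos hεle hq_lb hq_ub hG_pos hH _ x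
    have int1 : ∀ x, Integrable (fun y => q x y * Qiter G M n φ y) ν := by
      intro x
      refine bdd_integrable ((hqx x).mul hm) (εp * εp ^ n) (fun y => ?_) ν
      simp only [Pi.mul_apply, Pi.sub_apply, Pi.div_apply]
      rw [abs_mul, abs_of_nonneg (hqnn x y)]
      exact mul_le_mul (hq_ub x y) (habs y) (abs_nonneg _) (hεm_pos.le.trans hεle)
    have int2 : ∀ x, Integrable (fun y => q x y * Qiter G M n (fun _ => (1:ℝ)) y) ν := by
      intro x
      refine bdd_integrable ((hqx x).mul hm1) (εp * εp ^ n) (fun y => ?_) ν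
      simp only [Pi.mul_apply, Pi.sub_apply, Pi.div_apply]
      rw [abs_mul, abs_of_nonneg (hqnn x y), abs_of_nonneg (h1nn y)]
      exact mul_le_mul (hq_ub x y) (hub y) (h1nn y) (hεm_pos.le.trans hεle)
    refine ⟨?_, ?_, ?_, ?_, ?_⟩
    · have := Qop_meas G M ν q εm εp hq_meas hεm_pos hεle hq_lb hq_ub hG_pos hH hm
      simpa [← funext r1] using this
    · intro x
      rw [r1 x, r2 x]
      calc |∫ y, q x y * Qiter G M n φ y ∂ν|
          ≤ ∫ y, |q x y * Qiter G M n φ y| ∂ν := by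
            simpa [Real.norm_eq_abs, abs_mul] using
              norm_integral_le_integral_norm (μ := ν) (fun y => q x y * Qiter G M n φ y)
        _ ≤ ∫ y, q x y * Qiter G M n (fun _ => (1:ℝ)) y ∂ν := by
            refine integral_mono (by simpa [abs_mul] using (int1 x).abs) (int2 x) fun y => ?_
            rw [abs_mul, abs_of_nonneg (hqnn x y)]
            exact mul_le_mul_of_nonneg_left (hdom y) (hqnn x y)
    · have := Qop_meas G M ν q εm εp hq_meas hεm_pos hεle hq_lb hq_ub hG_pos hH hm1
      simpa [← funext r2] using this
    · intro x
      rw [r2 x, pow_succ']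
      calc ∫ y, q x y * Qiter G M n (fun _ => (1:ℝ)) y ∂ν
          ≤ ∫ _y, εp * εp ^ n ∂ν := by
            refine integral_mono (int2 x) (integrable_const _) fun y => ?_
            exact mul_le_mul (hq_ub x y) (hub y) (h1nn y) (hεm_pos.le.trans hεle)
        _ = εp * εp ^ n := by simp
    · intro x
      rw [r2 x, pow_succ']
      calc (εm * εm ^ n : ℝ) = ∫ _y, εm * εm ^ n ∂ν := by simp
        _ ≤ ∫ y, q x y * Qiter G M n (fun _ => (1:ℝ)) y ∂ν := by
            refine integral_mono (integrable_const _) (int2 x) fun y => ?_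
            exact mul_le_mul (hq_lb x y) (hlb y) (pow_nonneg hεm_pos.le n) (hqnn x y)

lemma contraction (n : ℕ) {φ : X → ℝ} (hφ : Measurable φ) (hb : ∀ y, |φ y| ≤ 1)
    (x x' : X) :
    |Qiter G M n φ x / Qiter G M n (fun _ => (1:ℝ)) x
      - Qiter G M n φ x' / Qiter G M n (fun _ => (1:ℝ)) x'| ≤ 2 * (1 - εm / εp) ^ n := by
  have hεp_pos : (0:ℝ) < εp := lt_of_lt_of_le hεm_pos hεle
  have hα_pos : (0:ℝ) < εm / εp := div_pos hεm_pos hεp_pos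
  have hρ0 : (0:ℝ) ≤ 1 - εm / εp := by
    have : εm / εp ≤ 1 := (div_le_one hεp_pos).2 hεle
    linarith
  induction n generalizing x x' with
  | zero =>
    simp only [Qiter, pow_zero, mul_one, div_one]
    calc |φ x - φ x'| ≤ |φ x| + |φ x'| := abs_sub _ _
      _ ≤ 2 := by have := hb x; have := hb x'; linarith
  | succ n IH =>
    set D : ℝ := 2 * (1 - εm / εp) ^ n with hD
    set ρ : ℝ := 1 - εm / εp with hρ
    obtain ⟨hm, hdom, hm1, hub, hlb⟩ :=
      Qiter_bundle G M ν q εm εp hq_meas hεm_pos hεle hq_lb hq_ub hG_pos hH n hφ hb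
    obtain ⟨_, _, _, hub1, hlb1⟩ :=
      Qiter_bundle G M ν q εm εp hq_meas hεm_pos hεle hq_lb hq_ub hG_pos hH (n+1) hφ hb
    set g : X → ℝ := Qiter G M n (fun _ => (1:ℝ)) with hgdef
    set u : X → ℝ := Qiter G M n φ with hudef
    set ψ : X → ℝ := fun y => u y / g y with hψdef
    have gpos : ∀ y, 0 < g y := fun y => lt_of_lt_of_le (pow_pos hεm_pos n) (hlb y)
    have hψm : Measurable ψ := hm.div hm1
    have hψb : ∀ y, |ψ y| ≤ 1 := by
      intro y
      rw [hψdef, abs_div, abs_of_pos (gpos y), div_le_one (gpos y)]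
      exact hdom y
    have hIH : ∀ y y', |ψ y - ψ y'| ≤ D := fun y y' => IH y y'
    have hqx : ∀ x, Measurable fun y => q x y :=
      fun x => hq_meas.comp measurable_prodMk_left
    have hqnn : ∀ x y, 0 ≤ q x y := fun x y => le_trans hεm_pos.le (hq_lb x y)
    -- denominators
    set Z : X → ℝ := Qiter G M (n+1) (fun _ => (1:ℝ)) with hZdef
    have hZrep : ∀ x, Z x = ∫ y, q x y * g y ∂ν := fun x =>
      rep G M ν q εm εp hq_meas hεm_pos hεle hq_lb hq_ub hG_pos hH _ x
    have hZpos : ∀ x, 0 < Z x := fun x => lt_of_lt_of_le (pow_pos hεm_pos (n+1)) (hlb1 x)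
    set I : ℝ := ∫ y, g y ∂ν with hI
    have ig : Integrable g ν :=
      bdd_integrable ((hm1 : Measurable g)) (εp ^ n)
        (fun y => by rw [abs_of_pos (gpos y)]; exact hub y) ν
    have hIlb : εm ^ n ≤ I := by
      rw [hI]
      calc (εm ^ n : ℝ) = ∫ _y, (εm ^ n : ℝ) ∂ν := by simp
        _ ≤ ∫ y, g y ∂ν := integral_mono (integrable_const _) ig hlb
    have hIpos : 0 < I := lt_of_lt_of_le (pow_pos hεm_pos n) hIlb
    have iqg : ∀ x, Integrable (fun y => q x y * g y) ν := by
      intro x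
      refine bdd_integrable ((hqx x).mul hm1) (εp * εp ^ n) (fun y => ?_) ν
      simp only [Pi.mul_apply, Pi.sub_apply, Pi.div_apply]
      rw [abs_mul, abs_of_nonneg (hqnn x y), abs_of_pos (gpos y)]
      exact mul_le_mul (hq_ub x y) (hub y) (gpos y).le hεp_pos.le
    have hZle : ∀ x, Z x ≤ εp * I := by
      intro x
      rw [hZrep x]
      calc ∫ y, q x y * g y ∂ν ≤ ∫ y, εp * g y ∂ν :=
            integral_mono (iqg x) (ig.const_mul εp)
              (fun y => mul_le_mul_of_nonneg_right (hq_ub x y) (gpos y).le)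
        _ = εp * I := by rw [integral_const_mul]
    -- the residual densities
    set a : X → X → ℝ := fun x y => q x y * g y / Z x - (εm / εp) * (g y / I) with hadef
    have ham : ∀ x, Measurable (a x) :=
      fun x => (((hqx x).mul hm1).div_const _).sub ((hm1.div_const _).const_mul _)
    have hann : ∀ x y, 0 ≤ a x y := by
      intro x y
      simp only [hadef]
      have h1 : (εm / εp) * (g y / I) = εm * g y / (εp * I) := by
        field_simp
      rw [h1, sub_nonneg]
      exact div_le_div₀ (mul_nonneg (hqnn x y) (gpos y).le)
        (mul_le_mul_of_nonneg_right (hq_lb x y) (gpos y).le) (hZpos x) (hZle x)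
    set C : ℝ := εp * εp ^ n / εm ^ (n + 1) with hC
    have haub : ∀ x y, a x y ≤ C := by
      intro x y
      calc a x y ≤ q x y * g y / Z x := by
            simp only [hadef]
            have : 0 ≤ (εm / εp) * (g y / I) :=
              mul_nonneg hα_pos.le (div_nonneg (gpos y).le hIpos.le)
            linarith
        _ ≤ C := div_le_div₀ (mul_nonneg hεp_pos.le (pow_nonneg hεp_pos.le n))
            (mul_le_mul (hq_ub x y) (hub y) (gpos y).le hεp_pos.le)
            (pow_pos hεm_pos (n+1)) (hlb1 x)
    have ia : ∀ x, Integrable (a x) ν := by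
      intro x
      refine bdd_integrable (ham x) C (fun y => ?_) ν
      rw [abs_of_nonneg (hann x y)]; exact haub x y
    have iψa : ∀ x, Integrable (fun y => ψ y * a x y) ν := by
      intro x
      refine bdd_integrable (hψm.mul (ham x)) C (fun y => ?_) ν
      simp only [Pi.mul_apply, Pi.sub_apply, Pi.div_apply]
      rw [abs_mul, abs_of_nonneg (hann x y)]
      calc |ψ y| * a x y ≤ 1 * a x y :=
            mul_le_mul_of_nonneg_right (hψb y) (hann x y)
        _ ≤ C := by rw [one_mul]; exact haub x y
    -- mass of a x
    have hmass : ∀ x, ∫ y, a x y ∂ν = ρ := by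
      intro x
      simp only [hadef]
      have : ∫ y, (q x y * g y / Z x - (εm / εp) * (g y / I)) ∂ν
          = (∫ y, q x y * g y ∂ν) / Z x - (εm / εp) * (I / I) := by
        rw [integral_sub ((iqg x).div_const _) (((ig.div_const _).const_mul _)),
          integral_div, integral_const_mul, integral_div]
      rw [this, ← hZrep x, div_self (hZpos x).ne', div_self hIpos.ne', mul_one]
    -- numerator representation
    have hFrep : ∀ x, Qiter G M (n+1) φ x / Z x
        = (∫ y, ψ y * a x y ∂ν) + (εm / εp) * ∫ y, ψ y * (g y / I) ∂ν := by
      intro x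
      have hrepφ : Qiter G M (n+1) φ x = ∫ y, q x y * u y ∂ν :=
        rep G M ν q εm εp hq_meas hεm_pos hεle hq_lb hq_ub hG_pos hH _ x
      have hsplit : ∀ y, ψ y * a x y
          = ψ y * (q x y * g y) / Z x - (εm / εp) * (ψ y * (g y / I)) := by
        intro y; simp only [hadef]; ring
      have iψqg : Integrable (fun y => ψ y * (q x y * g y) / Z x) ν := by
        refine bdd_integrable
          ((hψm.mul ((hqx x).mul hm1)).div_const _) C (fun y => ?_) ν
        have hZa : |Z x| = Z x := abs_of_pos (hZpos x)
        simp only [Pi.mul_apply, Pi.sub_apply, Pi.div_apply]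
        rw [abs_div, hZa, abs_mul]
        calc |ψ y| * |q x y * g y| / Z x ≤ 1 * |q x y * g y| / Z x := by
              gcongr
              · exact (hZpos x).le
              · exact hψb y
          _ = |q x y * g y| / Z x := by rw [one_mul]
          _ ≤ C := by
              rw [abs_mul, abs_of_nonneg (hqnn x y), abs_of_pos (gpos y)]
              exact div_le_div₀ (mul_nonneg hεp_pos.le (pow_nonneg hεp_pos.le n))
                (mul_le_mul (hq_ub x y) (hub y) (gpos y).le hεp_pos.le)
                (pow_pos hεm_pos (n+1)) (hlb1 x)
      have iψgI : Integrable (fun y => ψ y * (g y / I)) ν := by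
        refine bdd_integrable (hψm.mul (hm1.div_const _)) (εp ^ n / εm ^ n)
          (fun y => ?_) ν
        have h1 : |g y / I| = g y / I := abs_of_pos (div_pos (gpos y) hIpos)
        simp only [Pi.mul_apply, Pi.sub_apply, Pi.div_apply]
        rw [abs_mul, h1]
        calc |ψ y| * (g y / I) ≤ 1 * (g y / I) :=
              mul_le_mul_of_nonneg_right (hψb y) (div_nonneg (gpos y).le hIpos.le)
          _ ≤ εp ^ n / εm ^ n := by
              rw [one_mul]
              exact div_le_div₀ (pow_nonneg hεp_pos.le n) (hub y) (pow_pos hεm_pos n) hIlb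
      have e1 : ∫ y, ψ y * a x y ∂ν
          = (∫ y, ψ y * (q x y * g y) ∂ν) / Z x
            - (εm / εp) * ∫ y, ψ y * (g y / I) ∂ν := by
        calc ∫ y, ψ y * a x y ∂ν
            = ∫ y, (ψ y * (q x y * g y) / Z x - (εm / εp) * (ψ y * (g y / I))) ∂ν :=
              integral_congr_ae (Eventually.of_forall hsplit)
          _ = _ := by rw [integral_sub iψqg (iψgI.const_mul _), integral_div,
              integral_const_mul]
      have e2 : ∀ y, ψ y * (q x y * g y) = q x y * u y := by
        intro y
        have : ψ y * g y = u y := div_mul_cancel₀ _ (gpos y).ne'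
        calc ψ y * (q x y * g y) = q x y * (ψ y * g y) := by ring
          _ = q x y * u y := by rw [this]
      rw [e1, hrepφ]
      rw [integral_congr_ae (Eventually.of_forall e2)]
      ring
    -- the difference
    set J : X → ℝ := fun x => ∫ y, ψ y * a x y ∂ν with hJ
    have hΔ : Qiter G M (n+1) φ x / Z x - Qiter G M (n+1) φ x' / Z x' = J x - J x' := by
      rw [hFrep x, hFrep x']; ring
    -- inner bound
    have inner : ∀ x y', |J x - ρ * ψ y'| ≤ D * ρ := by
      intro x y'
      have e : J x - ρ * ψ y' = ∫ y, (ψ y - ψ y') * a x y ∂ν := by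
        have : ∫ y, (ψ y - ψ y') * a x y ∂ν
            = (∫ y, ψ y * a x y ∂ν) - ψ y' * ∫ y, a x y ∂ν := by
          have : ∀ y, (ψ y - ψ y') * a x y = ψ y * a x y - ψ y' * a x y := fun y => by ring
          rw [integral_congr_ae (Eventually.of_forall this),
            integral_sub (iψa x) ((ia x).const_mul _), integral_const_mul]
        rw [this, hmass x, hJ]; ring
      rw [e]
      have iΔa : Integrable (fun y => (ψ y - ψ y') * a x y) ν := by
        refine bdd_integrable ((hψm.sub measurable_const).mul (ham x)) (2 * C)
          (fun y => ?_) ν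
        simp only [Pi.mul_apply, Pi.sub_apply, Pi.div_apply]
        rw [abs_mul, abs_of_nonneg (hann x y)]
        have h2 : |ψ y - ψ y'| ≤ 2 := by
          have := hψb y; have := hψb y'
          calc |ψ y - ψ y'| ≤ |ψ y| + |ψ y'| := abs_sub _ _
            _ ≤ 2 := by linarith
        exact mul_le_mul h2 (haub x y) (hann x y) (by norm_num)
      calc |∫ y, (ψ y - ψ y') * a x y ∂ν|
          ≤ ∫ y, |ψ y - ψ y'| * |a x y| ∂ν := by
            simpa [Real.norm_eq_abs, abs_mul] using
              norm_integral_le_integral_norm (μ := ν) (fun y => (ψ y - ψ y') * a x y)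
        _ ≤ ∫ y, D * a x y ∂ν := by
            refine integral_mono (by simpa [abs_mul] using iΔa.abs)
              ((ia x).const_mul D) fun y => ?_
            rw [abs_of_nonneg (hann x y)]
            exact mul_le_mul_of_nonneg_right (hIH y y') (hann x y)
        _ = D * ρ := by rw [integral_const_mul, hmass x]
    -- putting things together
    have hDnn : 0 ≤ D := mul_nonneg (by norm_num) (pow_nonneg hρ0 n)
    have habsΔ : |J x - J x'| ≤ D * ρ := by
      rcases eq_or_lt_of_le hρ0 with hρeq | hρpos
      · have hz : ∀ z, |J z| ≤ ρ := by
          intro z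
          calc |J z| ≤ ∫ y, |ψ y| * |a z y| ∂ν := by
                simpa [Real.norm_eq_abs, abs_mul] using
                  norm_integral_le_integral_norm (μ := ν) (fun y => ψ y * a z y)
            _ ≤ ∫ y, a z y ∂ν := by
                refine integral_mono (by simpa [abs_mul] using (iψa z).abs) (ia z)
                  fun y => ?_
                rw [abs_of_nonneg (hann z y)]
                calc |ψ y| * a z y ≤ 1 * a z y :=
                      mul_le_mul_of_nonneg_right (hψb y) (hann z y)
                  _ = a z y := one_mul _
            _ = ρ := hmass z
        have h1 := hz x; have h2 := hz x'
        rw [← hρeq] at h1 h2 ⊢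
        have : |J x - J x'| ≤ |J x| + |J x'| := abs_sub _ _
        rw [mul_zero]
        linarith [abs_nonneg (J x), abs_nonneg (J x')]
      · have iT : Integrable (fun y' => a x' y' * (J x - ρ * ψ y')) ν := by
          refine bdd_integrable ((ham x').mul (measurable_const.sub (hψm.const_mul ρ)))
            (C * (|J x| + ρ)) (fun y' => ?_) ν
          simp only [Pi.mul_apply, Pi.sub_apply, Pi.div_apply]
          rw [abs_mul, abs_of_nonneg (hann x' y')]
          refine mul_le_mul (haub x' y') ?_ (abs_nonneg _) (le_trans (hann x' y') (haub x' y'))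
          calc |J x - ρ * ψ y'| ≤ |J x| + |ρ * ψ y'| := abs_sub _ _
            _ ≤ |J x| + ρ := by
                rw [abs_mul, abs_of_pos hρpos]
                have := hψb y'
                nlinarith
        have hT : ∫ y', a x' y' * (J x - ρ * ψ y') ∂ν = ρ * (J x - J x') := by
          have e3 : ∀ y', a x' y' * (J x - ρ * ψ y')
              = J x * a x' y' - ρ * (ψ y' * a x' y') := fun y' => by ring
          rw [integral_congr_ae (Eventually.of_forall e3),
            integral_sub ((ia x').const_mul _) ((iψa x').const_mul _),
            integral_const_mul, integral_const_mul, hmass x']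
          simp only [hJ]
          ring
        have hTb : |∫ y', a x' y' * (J x - ρ * ψ y') ∂ν| ≤ ρ * (D * ρ) := by
          calc |∫ y', a x' y' * (J x - ρ * ψ y') ∂ν|
              ≤ ∫ y', |a x' y'| * |J x - ρ * ψ y'| ∂ν := by
                simpa [Real.norm_eq_abs, abs_mul] using
                  norm_integral_le_integral_norm (μ := ν)
                    (fun y' => a x' y' * (J x - ρ * ψ y'))
            _ ≤ ∫ y', a x' y' * (D * ρ) ∂ν := by
                refine integral_mono (by simpa [abs_mul] using iT.abs)
                  ((ia x').mul_const _) fun y' => ?_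
                rw [abs_of_nonneg (hann x' y')]
                exact mul_le_mul_of_nonneg_left (inner x y') (hann x' y')
            _ = ρ * (D * ρ) := by rw [integral_mul_const, hmass x']
        rw [hT, abs_mul, abs_of_pos hρpos] at hTb
        exact le_of_mul_le_mul_left hTb hρpos
    calc |Qiter G M (n+1) φ x / Z x - Qiter G M (n+1) φ x' / Z x'|
        = |J x - J x'| := by rw [hΔ]
      _ ≤ D * ρ := habsΔ
      _ = 2 * ρ ^ (n+1) := by rw [hD]; ring

include hlam_pos h_meas_eq

lemma eigen_step {φ : X → ℝ} (hφ : Measurable φ) (C : ℝ) (hb : ∀ y, |φ y| ≤ C) :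
    ∫ x, Qop G M φ x ∂ηs = lam * ∫ y, φ y ∂ηs := by
  have hεp_pos : (0:ℝ) < εp := lt_of_lt_of_le hεm_pos hεle
  have hqnn : ∀ x y, 0 ≤ q x y := fun x y => le_trans hεm_pos.le (hq_lb x y)
  have hqm2 : Measurable fun p : X × X => q p.2 p.1 := hq_meas.comp measurable_swap
  -- step 1: representation + Fubini
  have hub : ∀ p : X × X, |q p.1 p.2 * φ p.2| ≤ εp * C := by
    intro p
    rw [abs_mul, abs_of_nonneg (hqnn p.1 p.2)]
    exact mul_le_mul (hq_ub _ _) (hb _) (abs_nonneg _) hεp_pos.le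
  have hprodint : Integrable (Function.uncurry fun x y => q x y * φ y) (ηs.prod ν) := by
    refine (integrable_const (εp * C)).mono'
      ((hq_meas.mul (hφ.comp measurable_snd)).aestronglyMeasurable) ?_
    exact Eventually.of_forall fun p => by simpa [Function.uncurry] using hub p
  have swap1 : ∫ x, ∫ y, q x y * φ y ∂ν ∂ηs = ∫ y, ∫ x, q x y * φ y ∂ηs ∂ν :=
    integral_integral_swap hprodint
  have lhs_eq : ∫ x, Qop G M φ x ∂ηs = ∫ y, (∫ x, q x y ∂ηs) * φ y ∂ν := by
    calc ∫ x, Qop G M φ x ∂ηs = ∫ x, ∫ y, q x y * φ y ∂ν ∂ηs := by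
          refine integral_congr_ae (Eventually.of_forall fun x => ?_)
          exact rep G M ν q εm εp hq_meas hεm_pos hεle hq_lb hq_ub hG_pos hH φ x
      _ = ∫ y, ∫ x, q x y * φ y ∂ηs ∂ν := swap1
      _ = ∫ y, (∫ x, q x y ∂ηs) * φ y ∂ν := by
          refine integral_congr_ae (Eventually.of_forall fun y => ?_)
          exact integral_mul_const _ _
  -- step 2: the density identity
  set r : X → ℝ≥0∞ := fun y => ∫⁻ x, ENNReal.ofReal (q x y) ∂ηs with hr
  have hrmeas : Measurable r := Measurable.lintegral_prod_left
    (f := fun x y => ENNReal.ofReal (q x y)) hq_meas.ennreal_ofReal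
  have hrub : ∀ y, r y ≤ ENNReal.ofReal εp := by
    intro y
    calc r y ≤ ∫⁻ _x, ENNReal.ofReal εp ∂ηs :=
          lintegral_mono fun x => ENNReal.ofReal_le_ofReal (hq_ub x y)
      _ = ENNReal.ofReal εp := by simp
  have hrfin : ∀ y, r y ≠ ∞ := fun y => ((hrub y).trans_lt ENNReal.ofReal_lt_top).ne
  have hwd : ν.withDensity r = (ENNReal.ofReal lam) • ηs := by
    ext A hA
    rw [withDensity_apply _ hA, Measure.smul_apply, smul_eq_mul]
    have swap2 : ∫⁻ y in A, r y ∂ν = ∫⁻ x, ∫⁻ y in A, ENNReal.ofReal (q x y) ∂ν ∂ηs := by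
      simp only [hr]
      exact lintegral_lintegral_swap
        (f := fun y x => ENNReal.ofReal (q x y)) (hqm2.ennreal_ofReal.aemeasurable)
    rw [swap2]
    calc ∫⁻ x, ∫⁻ y in A, ENNReal.ofReal (q x y) ∂ν ∂ηs
        = ∫⁻ x, ENNReal.ofReal (G x) * M x A ∂ηs := by
          refine lintegral_congr fun x => ?_
          rw [hH x A hA]
      _ = ENNReal.ofReal lam * ηs A := h_meas_eq A hA
  -- step 3: convert to real integrals
  have key : ∫ y, (r y).toReal * φ y ∂ν = lam * ∫ y, φ y ∂ηs := by
    have h1 : ∫ y, φ y ∂(ν.withDensity r) = ∫ y, (r y).toReal * φ y ∂ν := by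
      have hcongr : ν.withDensity r
          = ν.withDensity (fun y => ((r y).toNNReal : ℝ≥0∞)) := by
        refine withDensity_congr_ae (Eventually.of_forall fun y => ?_) |>.symm
        exact ENNReal.coe_toNNReal (hrfin y)
      rw [hcongr, integral_withDensity_eq_integral_smul
        hrmeas.ennreal_toNNReal]
      refine integral_congr_ae (Eventually.of_forall fun y => ?_)
      simp [NNReal.smul_def, ENNReal.toReal]
    have h2 : ∫ y, φ y ∂((ENNReal.ofReal lam) • ηs) = lam * ∫ y, φ y ∂ηs := by
      rw [integral_smul_measure, ENNReal.toReal_ofReal hlam_pos.le, smul_eq_mul]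
    rw [← h1, hwd, h2]
  rw [lhs_eq, ← key]
  refine integral_congr_ae (Eventually.of_forall fun y => ?_)
  have hRy : ∫ x, q x y ∂ηs = (r y).toReal := by
    rw [hr]
    rw [integral_eq_lintegral_of_nonneg_ae (Eventually.of_forall fun x => hqnn x y)
      (hqm2.comp measurable_prodMk_left).aestronglyMeasurable]
  show (∫ x, q x y ∂ηs) * φ y = (r y).toReal * φ y
  rw [hRy]

lemma eigen_iter (n : ℕ) {φ : X → ℝ} (hφ : Measurable φ) (hb : ∀ y, |φ y| ≤ 1) :
    ∫ x, Qiter G M n φ x ∂ηs = lam ^ n * ∫ y, φ y ∂ηs := by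
  induction n with
  | zero => simp [Qiter]
  | succ n ih =>
    obtain ⟨hm, hdom, hm1, hub, hlb⟩ :=
      Qiter_bundle G M ν q εm εp hq_meas hεm_pos hεle hq_lb hq_ub hG_pos hH n hφ hb
    have step : ∫ x, Qop G M (Qiter G M n φ) x ∂ηs = lam * ∫ y, Qiter G M n φ y ∂ηs :=
      eigen_step G M ν q εm εp hq_meas hεm_pos hεle hq_lb hq_ub hG_pos hH lam hlam_pos
        ηs h_meas_eq hm (εp ^ n) (fun x => (hdom x).trans (hub x))
    calc ∫ x, Qiter G M (n+1) φ x ∂ηs = ∫ x, Qop G M (Qiter G M n φ) x ∂ηs := rfl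
      _ = lam * ∫ y, Qiter G M n φ y ∂ηs := step
      _ = lam ^ (n+1) * ∫ y, φ y ∂ηs := by rw [ih]; ring

end Aux

theorem stmt9 {X : Type*} [MeasurableSpace X]
    (G : X → ℝ) (M : Kernel X X) [IsMarkovKernel M]
    (ν : Measure X) [IsProbabilityMeasure ν]
    (q : X → X → ℝ) (εm εp : ℝ)
    (hq_meas : Measurable fun p : X × X => q p.1 p.2)
    (hεm_pos : 0 < εm) (hεle : εm ≤ εp)
    (hq_lb : ∀ x y, εm ≤ q x y) (hq_ub : ∀ x y, q x y ≤ εp)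
    (hG_meas : Measurable G) (hG_pos : ∀ x, 0 < G x) (hG_bdd : ∃ c, ∀ x, G x ≤ c)
    (hH : ∀ x (A : Set X), MeasurableSet A →
      ENNReal.ofReal (G x) * M x A = ∫⁻ y in A, ENNReal.ofReal (q x y) ∂ν)
    (lam : ℝ) (hlam_pos : 0 < lam)
    (ηs : Measure X) [IsProbabilityMeasure ηs]
    (hs : X → ℝ) (hhs_meas : Measurable hs)
    (hhs_lb : ∀ x, εm / εp ≤ hs x) (hhs_ub : ∀ x, hs x ≤ εp / εm)
    (h_meas_eq : ∀ A : Set X, MeasurableSet A →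
      ∫⁻ x, ENNReal.ofReal (G x) * M x A ∂ηs = ENNReal.ofReal lam * ηs A)
    (h_fun_eq : ∀ x, Qop G M hs x = lam * hs x)
    (h_norm : ∫ x, hs x ∂ηs = 1)
    (μ : Measure X) [IsProbabilityMeasure μ] :
    ∀ n : ℕ, ∀ φ : X → ℝ, Measurable φ → (∀ y, |φ y| ≤ 1) →
      |etaInt G M μ n φ - ∫ y, φ y ∂ηs| ≤ (1 - εm / εp) ^ n * (4 * (εp / εm) ^ 3) := by
  intro n φ hφ hb
  have hεp_pos : (0:ℝ) < εp := lt_of_lt_of_le hεm_pos hεle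
  have hne : Nonempty X := by
    by_contra h
    rw [not_nonempty_iff] at h
    have h1 : (ηs : Measure X) Set.univ = 1 := measure_univ
    rw [Set.univ_eq_empty_iff.2 h, measure_empty] at h1
    exact zero_ne_one h1
  obtain ⟨x0⟩ := hne
  obtain ⟨hm, hdom, hm1, hub, hlb⟩ :=
    Qiter_bundle G M ν q εm εp hq_meas hεm_pos hεle hq_lb hq_ub hG_pos hH n hφ hb
  set D : ℝ := 2 * (1 - εm / εp) ^ n with hD
  have hρ0 : (0:ℝ) ≤ 1 - εm / εp := by
    have : εm / εp ≤ 1 := (div_le_one hεp_pos).2 hεle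
    linarith
  have hD0 : 0 ≤ D := mul_nonneg (by norm_num) (pow_nonneg hρ0 n)
  set c : ℝ := Qiter G M n φ x0 / Qiter G M n (fun _ => (1:ℝ)) x0 with hc
  have hclose : ∀ x, |Qiter G M n φ x / Qiter G M n (fun _ => (1:ℝ)) x - c| ≤ D :=
    fun x => contraction G M ν q εm εp hq_meas hεm_pos hεle hq_lb hq_ub hG_pos hH
      n hφ hb x x0
  have habs : ∀ x, |Qiter G M n φ x| ≤ εp ^ n := fun x => (hdom x).trans (hub x)
  have h1 : |etaInt G M μ n φ - c| ≤ D :=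
    ratio_close μ hm hm1 (εp ^ n) (εp ^ n) (εm ^ n) (pow_pos hεm_pos n)
      hlb hub habs c D hD0 hclose
  have h2 : |(∫ y, φ y ∂ηs) - c| ≤ D := by
    have hA : ∫ x, Qiter G M n φ x ∂ηs = lam ^ n * ∫ y, φ y ∂ηs :=
      eigen_iter G M ν q εm εp hq_meas hεm_pos hεle hq_lb hq_ub hG_pos hH lam
        hlam_pos ηs h_meas_eq n hφ hb
    have hB : ∫ x, Qiter G M n (fun _ => (1:ℝ)) x ∂ηs = lam ^ n := by
      have := eigen_iter G M ν q εm εp hq_meas hεm_pos hεle hq_lb hq_ub hG_pos hH lam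
        hlam_pos ηs h_meas_eq n (φ := fun _ => (1:ℝ)) measurable_const
        (fun y => by norm_num)
      simpa using this
    have hr := ratio_close ηs hm hm1 (εp ^ n) (εp ^ n) (εm ^ n) (pow_pos hεm_pos n)
      hlb hub habs c D hD0 hclose
    rw [hA, hB, mul_div_cancel_left₀ _ (pow_ne_zero n hlam_pos.ne')] at hr
    exact hr
  have hk : (1:ℝ) ≤ (εp / εm) ^ 3 := one_le_pow₀ ((one_le_div hεm_pos).2 hεle)
  calc |etaInt G M μ n φ - ∫ y, φ y ∂ηs|
      ≤ |etaInt G M μ n φ - c| + |c - ∫ y, φ y ∂ηs| := abs_sub_le _ _ _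
    _ ≤ D + D := by
        have := abs_sub_comm c (∫ y, φ y ∂ηs)
        rw [← abs_sub_comm (∫ y, φ y ∂ηs) c]
        exact add_le_add h1 h2
    _ ≤ (1 - εm / εp) ^ n * (4 * (εp / εm) ^ 3) := by
        rw [hD]
        nlinarith [pow_nonneg hρ0 n]
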